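/- Fix integers $m \ge 2$ and $n_1, \dots, n_m \ge 2$. Set $\mathcal{N} = n_1 \cdots n_m$, $\mathcal{N}_i = \mathcal{N}/n_i$, and $s = \gcd(\mathcal{N}_1, \dots, \mathcal{N}_m)$. Let $G = \{ y \in (\mathbb{C}^\times)^m : y_1^{n_1} = y_i^{n_i} \text{ for } i = 2, \dots, m \}$, a subgroup of $(\mathbb{C}^\times)^m$, and let $T = \{ (u^{\mathcal{N}_1/s}, \dots, u^{\mathcal{N}_m/s}) : u \in \mathbb{C}^\times \}$. Then $T$ is a subgroup of $G$, and the index $[G : T]$ is finite and equal to $s$; in particular the quotient group $G/T$ is a finite abelian group of order $s$. -/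

import Mathlib

/-- Bézout's identity for a finite gcd of natural numbers (with integer coefficients). -/
lemma finset_gcd_bezout {ι : Type*} [DecidableEq ι] (t : Finset ι) (f : ι → ℕ) :
    ∃ c : ι → ℤ, ∑ i ∈ t, c i * (f i : ℤ) = ((t.gcd f : ℕ) : ℤ) := by
  induction t using Finset.induction_on with
  | empty => exact ⟨fun _ => 0, by simp⟩
  | @insert b t' ha ih =>
    obtain ⟨c, hc⟩ := ih
    refine ⟨fun i => if i = b then Nat.gcdA (f b) (t'.gcd f)
      else Nat.gcdB (f b) (t'.gcd f) * c i, ?_⟩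
    rw [Finset.sum_insert ha, Finset.gcd_insert]
    have h1 : ((Nat.gcd (f b) (t'.gcd f) : ℕ) : ℤ)
        = (f b : ℤ) * Nat.gcdA (f b) (t'.gcd f)
          + ((t'.gcd f : ℕ) : ℤ) * Nat.gcdB (f b) (t'.gcd f) := Nat.gcd_eq_gcd_ab _ _
    have h2 : ∑ i ∈ t', (if i = b then Nat.gcdA (f b) (t'.gcd f)
        else Nat.gcdB (f b) (t'.gcd f) * c i) * (f i : ℤ)
        = Nat.gcdB (f b) (t'.gcd f) * ∑ i ∈ t', c i * (f i : ℤ) := by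
      rw [Finset.mul_sum]
      refine Finset.sum_congr rfl fun i hi => ?_
      have : i ≠ b := fun h => ha (h ▸ hi)
      rw [if_neg this]; ring
    show _ = ((Nat.gcd (f b) (t'.gcd f) : ℕ) : ℤ)
    simp only [if_pos rfl]
    rw [h2, hc, h1]
    simp only [if_true]
    ring

/-- Product of integer powers of a fixed element equals the power by the sum. -/
lemma prod_zpow_sum {G : Type*} [CommGroup G] {ι : Type*} (u : G) (t : Finset ι) (c : ι → ℤ) :
    ∏ i ∈ t, u ^ c i = u ^ (∑ i ∈ t, c i) := by
  induction t using Finset.cons_induction with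
  | empty => simp
  | cons b t' hb ih => rw [Finset.prod_cons, Finset.sum_cons, ih, zpow_add]

/-- Example 5.1(4) of Neumann–Wahl, "The End Curve Theorem for normal complex surface
singularities".  For integers `m ≥ 2` and `n 0, …, n (m-1) ≥ 2`, set `N = ∏ n i`,
`Ni i = N / n i`, `s = gcd (Ni 0, …, Ni (m-1))`.  Inside the torus `(ℂ^×)^m`
(with coordinatewise multiplication) let `G` be the subgroup
`{y : y 0 ^ n 0 = y i ^ n i for i ≠ 0}` and `T` the one-parameter subgroup
`{(u^(Ni 0 / s), …, u^(Ni (m-1) / s)) : u ∈ ℂ^×}`.  Then `T ≤ G`, the index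
`[G : T]` is finite and equal to `s`; in particular the quotient group `G/T` is a
finite (abelian) group of order `s`. -/
theorem index_of_identity_component (m : ℕ) (hm : 2 ≤ m) (i0 : Fin m) (hi0 : (i0 : ℕ) = 0)
    (n : Fin m → ℕ) (hn : ∀ i, 2 ≤ n i)
    (N : ℕ) (hN : N = ∏ i, n i)
    (s : ℕ) (hs : s = Finset.gcd Finset.univ (fun i => N / n i)) :
    ∃ G T : Subgroup (Fin m → ℂˣ),
      (G : Set (Fin m → ℂˣ)) = {y | ∀ i, i ≠ i0 → y i0 ^ n i0 = y i ^ n i} ∧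
      (T : Set (Fin m → ℂˣ)) = {y | ∃ u : ℂˣ, y = fun j => u ^ (N / n j / s)} ∧
      T ≤ G ∧ (T.subgroupOf G).FiniteIndex ∧ T.relIndex G = s ∧
      Nat.card (↥G ⧸ T.subgroupOf G) = s := by
  classical
  -- Basic arithmetic facts
  have hnpos : ∀ i, 0 < n i := fun i => lt_of_lt_of_le two_pos (hn i)
  have hNpos : 0 < N := hN ▸ Finset.prod_pos fun i _ => hnpos i
  have hdvdN : ∀ i, n i ∣ N := fun i => hN ▸ Finset.dvd_prod_of_mem n (Finset.mem_univ i)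
  have hsdvd : ∀ i, s ∣ N / n i := fun i => hs ▸ Finset.gcd_dvd (Finset.mem_univ i)
  have hNi0pos : 0 < N / n i0 := Nat.div_pos (Nat.le_of_dvd hNpos (hdvdN i0)) (hnpos i0)
  have hspos : 0 < s := by
    rcases Nat.eq_zero_or_pos s with h | h
    · exfalso
      have h0 : Finset.gcd Finset.univ (fun i => N / n i) = 0 := hs ▸ h
      have := Finset.gcd_eq_zero_iff.mp h0 i0 (Finset.mem_univ i0)
      omega
    · exact h
  have hsN : s ∣ N := (hsdvd i0).trans (Nat.div_dvd_of_dvd (hdvdN i0))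
  set a : Fin m → ℕ := fun i => N / n i / s with ha
  have hae : ∀ i, a i * n i = N / s := by
    intro i
    have h1 : a i * s = N / n i := Nat.div_mul_cancel (hsdvd i)
    have h2 : a i * n i * s = N := by
      rw [mul_right_comm, h1, Nat.div_mul_cancel (hdvdN i)]
    have h3 : N / s * s = N := Nat.div_mul_cancel hsN
    exact Nat.eq_of_mul_eq_mul_right hspos (h2.trans h3.symm)
  have hNs_pos : 0 < N / s := Nat.div_pos (Nat.le_of_dvd hNpos hsN) hspos
  -- Bézout coefficients
  obtain ⟨d, hd⟩ := finset_gcd_bezout (Finset.univ : Finset (Fin m)) (fun i => N / n i)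
  rw [← hs] at hd
  have hda : ∑ i, d i * (a i : ℤ) = 1 := by
    have key : (∑ i, d i * (a i : ℤ)) * (s : ℤ) = 1 * (s : ℤ) := by
      rw [one_mul, Finset.sum_mul]
      conv_rhs => rw [← hd]
      refine Finset.sum_congr rfl fun i _ => ?_
      have hcast : ((N / n i : ℕ) : ℤ) = (a i : ℤ) * (s : ℤ) := by
        rw [← Nat.cast_mul]
        exact_mod_cast congrArg (Nat.cast : ℕ → ℤ) (Nat.div_mul_cancel (hsdvd i)).symm
      rw [hcast]; ring
    have hsne : (s : ℤ) ≠ 0 := by exact_mod_cast hspos.ne'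
    exact mul_right_cancel₀ hsne key
  -- The groups
  let f : ℂˣ →* (Fin m → ℂˣ) :=
    { toFun := fun u i => u ^ a i
      map_one' := by funext i; exact one_pow _
      map_mul' := fun u v => by funext i; exact mul_pow u v (a i) }
  let G : Subgroup (Fin m → ℂˣ) :=
    { carrier := {y | ∀ i, i ≠ i0 → y i0 ^ n i0 = y i ^ n i}
      one_mem' := by intro i _; simp
      mul_mem' := by
        intro x y hx hy i hi
        simp only [Pi.mul_apply, mul_pow]
        rw [hx i hi, hy i hi]
      inv_mem' := by
        intro x hx i hi
        simp only [Pi.inv_apply, inv_pow]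
        rw [hx i hi] }
  let lam : (Fin m → ℂˣ) →* ℂˣ :=
    { toFun := fun y => ∏ i, y i ^ d i
      map_one' := by simp
      map_mul' := fun x y => by
        simp only [Pi.mul_apply, mul_zpow]
        exact Finset.prod_mul_distrib }
  have hlamf : ∀ u : ℂˣ, lam (f u) = u := by
    intro u
    show ∏ i, (u ^ a i) ^ d i = u
    calc ∏ i, (u ^ a i) ^ d i = ∏ i, u ^ (d i * (a i : ℤ)) := by
          refine Finset.prod_congr rfl fun i _ => ?_
          rw [← zpow_natCast u (a i), ← zpow_mul, mul_comm]
      _ = u ^ (∑ i, d i * (a i : ℤ)) := prod_zpow_sum u _ _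
      _ = u := by rw [hda, zpow_one]
  -- For y ∈ G, lam y to the power N/s recovers the common value y i ^ n i
  have hlam_pow : ∀ y : Fin m → ℂˣ, (∀ i, i ≠ i0 → y i0 ^ n i0 = y i ^ n i) →
      (lam y) ^ (N / s) = y i0 ^ n i0 := by
    intro y hy
    have hyi : ∀ i, y i ^ n i = y i0 ^ n i0 := by
      intro i
      by_cases h : i = i0
      · subst h; rfl
      · exact (hy i h).symm
    show (∏ i, y i ^ d i) ^ (N / s) = y i0 ^ n i0
    rw [← Finset.prod_pow]
    calc ∏ i, (y i ^ d i) ^ (N / s)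
        = ∏ i, (y i0 ^ n i0) ^ ((a i : ℤ) * d i) := by
          refine Finset.prod_congr rfl fun i _ => ?_
          rw [← zpow_natCast (y i ^ d i) (N / s), ← zpow_mul]
          have he : d i * ((N / s : ℕ) : ℤ) = (n i : ℤ) * ((a i : ℤ) * d i) := by
            rw [← hae i]; push_cast; ring
          rw [he, zpow_mul, zpow_natCast, hyi i]
      _ = (y i0 ^ n i0) ^ (∑ i, (a i : ℤ) * d i) := prod_zpow_sum _ _ _
      _ = y i0 ^ n i0 := by
          have : ∑ i, (a i : ℤ) * d i = 1 := by
            rw [← hda]; exact Finset.sum_congr rfl fun i _ => mul_comm _ _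
          rw [this, zpow_one]
  have hTG : f.range ≤ G := by
    rintro y ⟨u, rfl⟩ i hi
    show (u ^ a i0) ^ n i0 = (u ^ a i) ^ n i
    rw [← pow_mul, ← pow_mul, hae i0, hae i]
  refine ⟨G, f.range, rfl, ?_, hTG, ?_⟩
  · -- description of T
    ext y
    constructor
    · rintro ⟨u, rfl⟩; exact ⟨u, rfl⟩
    · rintro ⟨u, rfl⟩; exact ⟨u, rfl⟩
  -- The finite group of roots of unity
  haveI : ∀ i, NeZero (n i) := fun i => ⟨(hnpos i).ne'⟩
  haveI : NeZero (N / s) := ⟨hNs_pos.ne'⟩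
  let j : (∀ i, rootsOfUnity (n i) ℂ) →* (Fin m → ℂˣ) :=
    { toFun := fun z i => (z i : ℂˣ)
      map_one' := rfl
      map_mul' := fun _ _ => rfl }
  have hjinj : Function.Injective j := by
    intro z z' h
    funext i
    exact Subtype.ext (congrFun h i)
  let χ := lam.comp j
  have hjG : ∀ z : ∀ i, rootsOfUnity (n i) ℂ, j z ∈ G := by
    intro z i hi
    show ((z i0 : ℂˣ)) ^ n i0 = ((z i : ℂˣ)) ^ n i
    rw [(mem_rootsOfUnity _ _).mp (z i0).2, (mem_rootsOfUnity _ _).mp (z i).2]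
  -- the quotient G/T is in bijection with ker χ
  have hbij : Nat.card (↥G ⧸ (f.range).subgroupOf G) = Nat.card χ.ker := by
    refine (Nat.card_congr (Equiv.ofBijective
      (fun z : χ.ker => QuotientGroup.mk (⟨j z.1, hjG z.1⟩ : ↥G)) ⟨?_, ?_⟩)).symm
    · -- injective
      intro z z' h
      rw [QuotientGroup.eq] at h
      rw [Subgroup.mem_subgroupOf] at h
      obtain ⟨u, hu⟩ := h
      have hu' : f u = (j z.1)⁻¹ * j z'.1 := hu
      have : u = 1 := by
        have h1 : lam (f u) = u := hlamf u
        rw [hu'] at h1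
        rw [map_mul, map_inv] at h1
        have hz : lam (j z.1) = 1 := z.2
        have hz' : lam (j z'.1) = 1 := z'.2
        rw [hz, hz'] at h1
        simpa using h1.symm
      rw [this, map_one] at hu'
      have : j z.1 = j z'.1 := by
        have := hu'.symm
        rwa [inv_mul_eq_one] at this
      exact Subtype.ext (hjinj this)
    · -- surjective
      intro q
      induction q using QuotientGroup.induction_on with
      | H yG =>
        obtain ⟨y, hy⟩ := yG
        set u := lam y with hu
        have hw : u ^ (N / s) = y i0 ^ n i0 := hlam_pow y hy
        have hyi : ∀ i, y i ^ n i = y i0 ^ n i0 := by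
          intro i
          by_cases h : i = i0
          · subst h; rfl
          · exact (hy i h).symm
        have hmem : ∀ i, (y i * (u ^ a i)⁻¹) ∈ rootsOfUnity (n i) ℂ := by
          intro i
          rw [mem_rootsOfUnity]
          rw [mul_pow, inv_pow, ← pow_mul, hae i, hw, hyi i]
          exact mul_inv_cancel _
        set z : ∀ i, rootsOfUnity (n i) ℂ := fun i => ⟨y i * (u ^ a i)⁻¹, hmem i⟩ with hz
        have hjz : j z = y * (f u)⁻¹ := rfl
        have hker : z ∈ χ.ker := by
          show lam (j z) = 1
          rw [hjz, map_mul, map_inv, hlamf u, ← hu]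
          exact mul_inv_cancel u
        refine ⟨⟨z, hker⟩, ?_⟩
        show QuotientGroup.mk (⟨j z, hjG z⟩ : ↥G) = QuotientGroup.mk (⟨y, hy⟩ : ↥G)
        rw [QuotientGroup.eq, Subgroup.mem_subgroupOf]
        refine ⟨u, ?_⟩
        show f u = (j z)⁻¹ * y
        rw [hjz]
        group
  -- counting: |ker χ| = s
  have hcardH : Nat.card (∀ i, rootsOfUnity (n i) ℂ) = N := by
    rw [Nat.card_pi, hN]
    exact Finset.prod_congr rfl fun i _ => by
      rw [Complex.card_rootsOfUnity]
  have hrange : χ.range = rootsOfUnity (N / s) ℂ := by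
    ext w
    constructor
    · rintro ⟨z, rfl⟩
      rw [mem_rootsOfUnity]
      show (∏ i, ((z i : ℂˣ)) ^ d i) ^ (N / s) = 1
      rw [← Finset.prod_pow]
      refine Finset.prod_eq_one fun i _ => ?_
      rw [← zpow_natCast (((z i : ℂˣ)) ^ d i) (N / s), ← zpow_mul]
      have he : d i * ((N / s : ℕ) : ℤ) = (n i : ℤ) * ((a i : ℤ) * d i) := by
        rw [← hae i]; push_cast; ring
      rw [he, zpow_mul, zpow_natCast, (mem_rootsOfUnity _ _).mp (z i).2, one_zpow]
    · intro hw
      have hw1 : w ^ (N / s) = 1 := (mem_rootsOfUnity _ _).mp hw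
      have hmem : ∀ i, (w ^ a i) ∈ rootsOfUnity (n i) ℂ := by
        intro i
        rw [mem_rootsOfUnity, ← pow_mul, hae i, hw1]
      refine ⟨fun i => ⟨w ^ a i, hmem i⟩, ?_⟩
      show lam (j _) = w
      have : j (fun i => (⟨w ^ a i, hmem i⟩ : rootsOfUnity (n i) ℂ)) = f w := rfl
      rw [this, hlamf]
  have hcardRange : Nat.card χ.range = N / s := by
    rw [hrange, Complex.card_rootsOfUnity]
  have hcardKer : Nat.card χ.ker = s := by
    have h1 := Subgroup.card_eq_card_quotient_mul_card_subgroup χ.ker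
    have h2 : Nat.card ((∀ i, rootsOfUnity (n i) ℂ) ⧸ χ.ker) = N / s := by
      rw [Nat.card_congr (QuotientGroup.quotientKerEquivRange χ).toEquiv]
      exact hcardRange
    rw [hcardH, h2] at h1
    have h3 : N / s * s = N := Nat.div_mul_cancel hsN
    exact Nat.eq_of_mul_eq_mul_left hNs_pos (h1.symm.trans h3.symm)
  have hfinal : Nat.card (↥G ⧸ (f.range).subgroupOf G) = s := hbij.trans hcardKer
  have hidx : ((f.range).subgroupOf G).index = s := by
    rw [Subgroup.index_eq_card]; exact hfinal
  exact ⟨⟨by rw [hidx]; exact hspos.ne'⟩, hidx, hfinal⟩
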